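/- For the binary matrix H described in the context (p an odd prime, 1 ≤ w ≤ p), for every position (x₀, y₀) with x₀, y₀ ∈ {0,…,p²−1} there exists a layer ℓ in the first horizontal block-layer (0 ≤ ℓ < p²) such that H(ℓ,(x₀,y₀)) = 1 and H(ℓ,(x,y)) = 0 for every position (x,y) ≠ (x₀,y₀) with x, y ∈ {0,…,p²−1}, |x − x₀| < p and |y − y₀| < p. (This is the condition guaranteeing that the 2-D classical QC-LDPC code defined by H can correct any p × p burst erasure.) -/
import Mathlib


open Matrix

/-- The layer-by-layer unfolding of the 2-D QC-LDPC parity-check tensor: a binary matrix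
with rows indexed by layers `ℓ ∈ {0,…,w·p²−1}` and columns indexed by positions
`(x, y)` with `x, y ∈ {0,…,p²−1}`; entry `(ℓ, (x, y))` equals `1` iff
`x ≡ ℓ + ζ_{⌊ℓ/p²⌋}(⌊ℓ/p⌋) + ⌊ℓ/p²⌋·(φ(⌊x/p⌋) + ψ(⌊y/p⌋)) (mod p)` and
`y ≡ ℓ + ⌊ℓ/p²⌋·φ(⌊x/p⌋) (mod p)`. -/
def Hmat (p w : ℕ) (φ ψ : ZMod p → ZMod p) (ζ : ℕ → ZMod p → ZMod p) :
    Matrix (Fin (w * p ^ 2)) (Fin (p ^ 2) × Fin (p ^ 2)) (ZMod 2) :=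
  fun ℓ xy =>
    if (((xy.1 : ℕ) : ZMod p) =
          ((ℓ : ℕ) : ZMod p) + ζ ((ℓ : ℕ) / p ^ 2) (((ℓ : ℕ) / p : ℕ) : ZMod p) +
            (((ℓ : ℕ) / p ^ 2 : ℕ) : ZMod p) *
              (φ (((xy.1 : ℕ) / p : ℕ) : ZMod p) + ψ (((xy.2 : ℕ) / p : ℕ) : ZMod p)) ∧
        ((xy.2 : ℕ) : ZMod p) =
          ((ℓ : ℕ) : ZMod p) +
            (((ℓ : ℕ) / p ^ 2 : ℕ) : ZMod p) * φ (((xy.1 : ℕ) / p : ℕ) : ZMod p))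
    then 1 else 0

/-- Burst-erasure criterion of Theorem 3: for every position `(x₀, y₀)` there is a layer
`ℓ` in the first horizontal block-layer (`ℓ < p²`) whose row has a `1` at `(x₀, y₀)` and
`0` at every other position `(x, y)` with `|x − x₀| < p` and `|y − y₀| < p`; hence the
code corrects any `p × p` burst erasure. -/
theorem stmt_10 (p w : ℕ) (hp : p.Prime) (hodd : Odd p) (hw1 : 1 ≤ w) (hwp : w ≤ p)
    (φ ψ : ZMod p → ZMod p) (hφ : Function.Bijective φ) (hψ : Function.Bijective ψ)
    (ζ : ℕ → ZMod p → ZMod p) (hζ : ∀ m < w, Function.Bijective (ζ m))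
    (xy₀ : Fin (p ^ 2) × Fin (p ^ 2)) :
    ∃ ℓ : Fin (w * p ^ 2), (ℓ : ℕ) < p ^ 2 ∧
      Hmat p w φ ψ ζ ℓ xy₀ = 1 ∧
      ∀ xy : Fin (p ^ 2) × Fin (p ^ 2), xy ≠ xy₀ →
        |((xy.1 : ℕ) : ℤ) - ((xy₀.1 : ℕ) : ℤ)| < p →
        |((xy.2 : ℕ) : ℤ) - ((xy₀.2 : ℕ) : ℤ)| < p →
        Hmat p w φ ψ ζ ℓ xy = 0 := by
  have hp0 : 0 < p := hp.pos
  haveI : NeZero p := ⟨hp0.ne'⟩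
  obtain ⟨m, hm⟩ := (hζ 0 hw1).surjective (((xy₀.1 : ℕ) : ZMod p) - ((xy₀.2 : ℕ) : ZMod p))
  set r : ℕ := (xy₀.2 : ℕ) % p with hr
  have hrp : r < p := Nat.mod_lt _ hp0
  have hmv : m.val < p := ZMod.val_lt m
  have hL : m.val * p + r < p ^ 2 := by nlinarith
  have hLw : m.val * p + r < w * p ^ 2 :=
    lt_of_lt_of_le hL (Nat.le_mul_of_pos_left _ hw1)
  set L : ℕ := m.val * p + r with hLdef
  have hdiv2 : L / p ^ 2 = 0 := Nat.div_eq_of_lt hL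
  have hdivp : L / p = m.val := by
    rw [hLdef, mul_comm, Nat.mul_add_div hp0, Nat.div_eq_of_lt hrp, add_zero]
  have hcastmv : ((m.val : ℕ) : ZMod p) = m := by
    simp [ZMod.natCast_val, ZMod.cast_id]
  have hcastL : ((L : ℕ) : ZMod p) = ((xy₀.2 : ℕ) : ZMod p) := by
    rw [hLdef]
    push_cast
    simp [hr, ZMod.natCast_mod]
  refine ⟨⟨L, hLw⟩, hL, ?_, ?_⟩
  · simp only [Hmat]
    rw [if_pos]
    refine ⟨?_, ?_⟩
    · show ((xy₀.1 : ℕ) : ZMod p) = _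
      simp only [show ((⟨L, hLw⟩ : Fin (w * p ^ 2)) : ℕ) = L from rfl, hdiv2, hdivp,
        hcastL, hcastmv, hm, Nat.cast_zero, zero_mul, add_zero]
      ring
    · show ((xy₀.2 : ℕ) : ZMod p) = _
      simp only [show ((⟨L, hLw⟩ : Fin (w * p ^ 2)) : ℕ) = L from rfl, hdiv2, hcastL,
        Nat.cast_zero, zero_mul, add_zero]
  · intro xy hne hx hy
    simp only [Hmat]
    rw [if_neg]
    rintro ⟨h1, h2⟩
    simp only [show ((⟨L, hLw⟩ : Fin (w * p ^ 2)) : ℕ) = L from rfl, hdiv2, hdivp,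
      hcastL, hcastmv, Nat.cast_zero, zero_mul, add_zero] at h1 h2
    -- h1 : (xy.1 : ZMod p) = (xy₀.2 : ZMod p) + ζ 0 m
    -- h2 : (xy.2 : ZMod p) = (xy₀.2 : ZMod p)
    have hx1 : ((xy.1 : ℕ) : ZMod p) = ((xy₀.1 : ℕ) : ZMod p) := by
      rw [h1, hm]; ring
    have heqx : (xy.1 : ℕ) = (xy₀.1 : ℕ) := by
      have hdvd : (p : ℤ) ∣ ((xy₀.1 : ℕ) : ℤ) - ((xy.1 : ℕ) : ℤ) :=
        ((ZMod.natCast_eq_natCast_iff _ _ _).1 hx1).dvd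
      have := Int.eq_zero_of_abs_lt_dvd hdvd (by rw [abs_sub_comm] at hx; exact hx)
      omega
    have heqy : (xy.2 : ℕ) = (xy₀.2 : ℕ) := by
      have hdvd : (p : ℤ) ∣ ((xy₀.2 : ℕ) : ℤ) - ((xy.2 : ℕ) : ℤ) :=
        ((ZMod.natCast_eq_natCast_iff _ _ _).1 h2).dvd
      have := Int.eq_zero_of_abs_lt_dvd hdvd (by rw [abs_sub_comm] at hy; exact hy)
      omega
    exact hne (Prod.ext (Fin.ext heqx) (Fin.ext heqy))
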